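/- Let S be a separable metric space and φ : C_b(S) → ℝ a monetary risk measure continuous from above. If φ is max-stable, then φ admits the representation φ(f) = max_{x ∈ S} { f(x) − I_min(x) } for all f ∈ C_b(S), where I_min(x) = sup_{f ∈ C_b(S)} { f(x) − φ(f) }. Conversely, if the acceptance set A of φ is of the form A = {f ∈ C_b(S) : f ≤ γ} for some function γ : S → (−∞, +∞], then φ is max-stable. -/

import Mathlib

open MeasureTheory Set Metric Filter Topology

noncomputable section

/-- The bounded Borel measurable functions on `S`. -/
def Bb (S : Type*) [MeasurableSpace S] : Set (S → ℝ) :=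
  {f | Measurable f ∧ ∃ C : ℝ, ∀ x, |f x| ≤ C}

/-- `φ` is a monetary risk measure on the class of functions `X`:
normalization, translation property and monotonicity. -/
def Monetary {S : Type*} (X : Set (S → ℝ)) (φ : (S → ℝ) → ℝ) : Prop :=
  φ 0 = 0 ∧
  (∀ f ∈ X, ∀ c : ℝ, φ (f + fun _ => c) = φ f + c) ∧
  (∀ f ∈ X, ∀ g ∈ X, (∀ x, f x ≤ g x) → φ f ≤ φ g)

/-- `φ` is max-stable on `X`. -/
def MaxStable {S : Type*} (X : Set (S → ℝ)) (φ : (S → ℝ) → ℝ) : Prop :=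
  ∀ f ∈ X, ∀ g ∈ X, φ (f ⊔ g) ≤ max (φ f) (φ g)

/-- The concentration function `J_A = inf_{r ∈ ℝ} φ(r · 1_{Aᶜ})`. -/
def conc {S : Type*} (φ : (S → ℝ) → ℝ) (A : Set S) : EReal :=
  ⨅ r : ℝ, (φ (Aᶜ.indicator fun _ => r) : EReal)

/-- The minimal rate function `I_min(x) = sup_{f ∈ C_b(S)} (f(x) - φ(f))`,
with values in `[0, +∞] ⊆ EReal`. -/
def IminE {S : Type*} [TopologicalSpace S] (φ : (S → ℝ) → ℝ) (x : S) : EReal :=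
  ⨆ f : BoundedContinuousFunction S ℝ, ((f x - φ ⇑f : ℝ) : EReal)

section Aux

open BoundedContinuousFunction

variable {S : Type*} [MetricSpace S]

/-- The distance to a set, capped at `b`, as a bounded continuous function. -/
def idb (C : Set S) (b : ℝ) : BoundedContinuousFunction S ℝ :=
  BoundedContinuousFunction.ofNormedAddCommGroup (fun x => min (Metric.infDist x C) b)
    ((Metric.continuous_infDist_pt C).min continuous_const) |b|
    (fun x => by
      rw [Real.norm_eq_abs, abs_le]
      constructor
      · have h1 : -|b| ≤ min 0 b := le_min (neg_nonpos_of_nonneg (abs_nonneg b)) (neg_abs_le b)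
        exact h1.trans (min_le_min Metric.infDist_nonneg le_rfl)
      · exact (min_le_right _ _).trans (le_abs_self b))

lemma idb_apply (C : Set S) (b : ℝ) (x : S) : idb C b x = min (Metric.infDist x C) b := rfl

lemma idb_nonneg (C : Set S) {b : ℝ} (hb : 0 ≤ b) (x : S) : 0 ≤ idb C b x :=
  le_min Metric.infDist_nonneg hb

/-- `Pm φ f m C` : every bounded continuous function dominating `f` on `C` has `φ`-value
at least `m`.  In other words, the "localization of `φ` to `C`" is at least `m`. -/
def Pm (φ : BoundedContinuousFunction S ℝ → ℝ) (f : BoundedContinuousFunction S ℝ)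
    (m : ℝ) (C : Set S) : Prop :=
  ∀ g : BoundedContinuousFunction S ℝ, (∀ x ∈ C, f x ≤ g x) → m ≤ φ g

variable (φ : BoundedContinuousFunction S ℝ → ℝ) (f : BoundedContinuousFunction S ℝ)

lemma bcf_le_of_ptwise {g h : BoundedContinuousFunction S ℝ} (hle : ∀ x, g x ≤ h x) : g ≤ h := hle

lemma Pm_mono_set {C C' : Set S} (h : C ⊆ C') {m : ℝ} (hP : Pm φ f m C) : Pm φ f m C' :=
  fun g hg => hP g fun x hx => hg x (h hx)

lemma Pm_mono {m m' : ℝ} (h : m' ≤ m) {C : Set S} (hP : Pm φ f m C) : Pm φ f m' C :=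
  fun g hg => h.trans (hP g hg)

lemma Pm_nonempty (hT : ∀ (g : BoundedContinuousFunction S ℝ) (c : ℝ),
      φ (g + BoundedContinuousFunction.const S c) = φ g + c)
    {m : ℝ} {C : Set S} (hP : Pm φ f m C) : C.Nonempty := by
  by_contra h
  rw [Set.not_nonempty_iff_eq_empty] at h
  subst h
  have h2 := hP (f + BoundedContinuousFunction.const S (m - 1 - φ f))
    (by intro x hx; exact absurd hx (Set.notMem_empty x))
  rw [hT] at h2
  linarith

lemma tendsto_zero_of_eventually_zero {u : ℕ → ℝ} (h : ∀ᶠ n in atTop, u n = 0) :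
    Tendsto u atTop (𝓝 0) :=
  tendsto_const_nhds.congr' (h.mono fun _ hn => hn.symm)

/-- Key covering lemma: if the localization of `φ` to a closed set `C` is at least `m`, and
`C` is covered by countably many sets, then the localization of `φ` to one of the covering
sets is at least `m - e`. -/
lemma cover_lemma
    (hT : ∀ (g : BoundedContinuousFunction S ℝ) (c : ℝ),
      φ (g + BoundedContinuousFunction.const S c) = φ g + c)
    (hms : ∀ g h : BoundedContinuousFunction S ℝ, φ (g ⊔ h) ≤ max (φ g) (φ h))
    (hca : ∀ u : ℕ → BoundedContinuousFunction S ℝ, (∀ n, u (n + 1) ≤ u n) →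
      (∀ x, Tendsto (fun n => u n x) atTop (𝓝 0)) →
      Tendsto (fun n => φ (u n)) atTop (𝓝 0))
    {C : Set S} (hC : IsClosed C) {Cs : ℕ → Set S} (hcov : C ⊆ ⋃ k, Cs k)
    {m e : ℝ} (he : 0 < e) (hem : e < m) (hP : Pm φ f m C) :
    ∃ k, Pm φ f (m - e) (Cs k) := by
  by_contra hcon
  push_neg at hcon
  have h1 : ∀ k, ∃ g : BoundedContinuousFunction S ℝ,
      (∀ x ∈ Cs k, f x ≤ g x) ∧ φ g < m - e := by
    intro k
    have h2 := hcon k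
    unfold Pm at h2
    push_neg at h2
    exact h2
  choose g hg hgφ using h1
  have hCne : C.Nonempty := Pm_nonempty φ f hT hP
  set h : ℕ → BoundedContinuousFunction S ℝ := fun N => partialSups g N with hh
  have hφh : ∀ N, φ (h N) < m - e := by
    intro N
    induction N with
    | zero => simpa [hh] using hgφ 0
    | succ N ih =>
      have h3 : h (N + 1) = h N ⊔ g (N + 1) := partialSups_succ g N
      rw [h3]
      exact (hms _ _).trans_lt (max_lt ih (hgφ _))
  set w : BoundedContinuousFunction S ℝ := idb C 1 with hw
  set d : ℕ → BoundedContinuousFunction S ℝ := fun N => (f - h N) ⊔ 0 with hd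
  set eN : ℕ → BoundedContinuousFunction S ℝ := fun N => (d N - (N : ℝ) • w) ⊔ 0 with heN
  have hdx : ∀ N x, d N x = max (f x - h N x) 0 := by
    intro N x
    simp [hd]
  have hex : ∀ N x, eN N x = max (d N x - (N : ℝ) * w x) 0 := by
    intro N x
    simp [heN]
  have hd_nonneg : ∀ N x, 0 ≤ d N x := fun N x => (hdx N x) ▸ le_max_right _ _
  have hd_ge : ∀ N x, f x - h N x ≤ d N x := fun N x => (hdx N x) ▸ le_max_left _ _
  have hd_anti : ∀ N x, d (N + 1) x ≤ d N x := by
    intro N x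
    rw [hdx, hdx]
    have : h N x ≤ h (N + 1) x := (partialSups g).monotone (Nat.le_succ N) x
    exact max_le_max (by linarith) le_rfl
  have he_anti : ∀ N x, eN (N + 1) x ≤ eN N x := by
    intro N x
    rw [hex, hex]
    have h4 : (N : ℝ) * w x ≤ ((N : ℝ) + 1) * w x := by
      have := idb_nonneg C (zero_le_one) x
      nlinarith [this]
    have h5 := hd_anti N x
    refine max_le_max ?_ le_rfl
    push_cast
    nlinarith [h4, h5]
  -- pointwise convergence of `eN` to 0
  have he_tend : ∀ x, Tendsto (fun N => eN N x) atTop (𝓝 0) := by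
    intro x
    apply tendsto_zero_of_eventually_zero
    by_cases hxC : x ∈ C
    · obtain ⟨k, hk⟩ := Set.mem_iUnion.1 (hcov hxC)
      filter_upwards [eventually_ge_atTop k] with N hN
      have h6 : g k x ≤ h N x := le_partialSups_of_le g hN x
      have h7 : f x ≤ g k x := hg k x hk
      have h8 : d N x = 0 := by
        rw [hdx]
        exact max_eq_right (by linarith)
      rw [hex, h8]
      have h9 : 0 ≤ (N : ℝ) * w x := by
        have := idb_nonneg C zero_le_one x
        positivity
      exact max_eq_right (by linarith)
    · have hw0 : 0 < w x := by
        rw [hw, idb_apply]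
        have := (hC.notMem_iff_infDist_pos hCne).1 hxC
        exact lt_min this zero_lt_one
      set B : ℝ := d 0 x
      have hdB : ∀ N, d N x ≤ B := by
        intro N
        induction N with
        | zero => exact le_rfl
        | succ N ih => exact (hd_anti N x).trans ih
      obtain ⟨K, hK⟩ := exists_nat_ge (B / w x)
      filter_upwards [eventually_ge_atTop K] with N hN
      rw [hex]
      apply max_eq_right
      have h10 : (K : ℝ) ≤ (N : ℝ) := by exact_mod_cast hN
      have h11 : B ≤ (N : ℝ) * w x := by
        have : B / w x ≤ (N : ℝ) := hK.trans h10
        calc B = (B / w x) * w x := by field_simp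
          _ ≤ (N : ℝ) * w x := by nlinarith [hw0]
      have := hdB N
      linarith
  -- scaled sequence
  set c' : ℝ := ‖f‖ + 1 with hc'
  have hc'pos : 0 < c' := by positivity
  set δ : ℝ := e / 2 with hδ
  have hδpos : 0 < δ := by positivity
  set a : ℝ := c' / δ with ha
  have hapos : 0 < a := by positivity
  set E : ℕ → BoundedContinuousFunction S ℝ := fun N => a • eN N with hE
  have hEx : ∀ N x, E N x = a * eN N x := by intro N x; simp [hE]
  have hφE : Tendsto (fun N => φ (E N)) atTop (𝓝 0) := by
    apply hca
    · intro N
      apply bcf_le_of_ptwise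
      intro x
      rw [hEx, hEx]
      exact mul_le_mul_of_nonneg_left (he_anti N x) hapos.le
    · intro x
      have := (he_tend x).const_mul a
      simpa [hEx] using this
  have hmint : 0 < m - e / 2 - (m - e) := by linarith
  have hev : ∀ᶠ N in atTop, φ (E N) < m - e / 2 :=
    hφE.eventually (gt_mem_nhds (by linarith))
  obtain ⟨N0, hN0⟩ := hev.exists
  set G : BoundedContinuousFunction S ℝ :=
    (h N0 + BoundedContinuousFunction.const S δ) ⊔ E N0 with hG
  have hGx : ∀ x, G x = max (h N0 x + δ) (E N0 x) := by
    intro x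
    simp [hG]
  have hGf : ∀ x ∈ C, f x ≤ G x := by
    intro x hxC
    have hwx : w x = 0 := by
      rw [hw, idb_apply, Metric.infDist_zero_of_mem hxC]
      simp
    have heq : eN N0 x = d N0 x := by
      rw [hex, hwx, mul_zero, sub_zero]
      exact max_eq_left (hd_nonneg N0 x)
    rcases le_or_gt (d N0 x) δ with hcase | hcase
    · have := hd_ge N0 x
      rw [hGx]
      have : f x ≤ h N0 x + δ := by linarith
      exact this.trans (le_max_left _ _)
    · rw [hGx]
      have h12 : E N0 x = a * d N0 x := by rw [hEx, heq]
      have h13 : c' ≤ a * d N0 x := by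
        have : a * δ = c' := by rw [ha]; exact div_mul_cancel₀ c' hδpos.ne'
        nlinarith [hapos]
      have h14 : f x ≤ c' := by
        have := f.norm_coe_le_norm x
        have := le_abs_self (f x)
        rw [Real.norm_eq_abs] at *
        simp only [hc']
        nlinarith [f.norm_coe_le_norm x, le_abs_self (f x)]
      refine le_trans ?_ (le_max_right _ _)
      rw [h12]; linarith
  have hφG : m ≤ φ G := hP G hGf
  have h15 : φ G ≤ max (φ (h N0 + BoundedContinuousFunction.const S δ)) (φ (E N0)) := hms _ _
  rw [hT] at h15
  have h16 := hφh N0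
  have : φ G < m - e / 2 := h15.trans_lt (max_lt (by linarith) hN0)
  linarith

/-- Nested closed sets on which the localization of `φ` stays at least `c > 0` have a
nonempty intersection. -/
lemma inter_lemma
    (hT : ∀ (g : BoundedContinuousFunction S ℝ) (c : ℝ),
      φ (g + BoundedContinuousFunction.const S c) = φ g + c)
    (hca : ∀ u : ℕ → BoundedContinuousFunction S ℝ, (∀ n, u (n + 1) ≤ u n) →
      (∀ x, Tendsto (fun n => u n x) atTop (𝓝 0)) →
      Tendsto (fun n => φ (u n)) atTop (𝓝 0))
    {D : ℕ → Set S} (hDcl : ∀ n, IsClosed (D n)) (hDmono : ∀ n, D (n + 1) ⊆ D n)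
    {c : ℝ} (hc : 0 < c) (hP : ∀ n, Pm φ f c (D n)) :
    (⋂ n, D n).Nonempty := by
  by_contra hcon
  rw [Set.not_nonempty_iff_eq_empty] at hcon
  have hne : ∀ n, (D n).Nonempty := fun n => Pm_nonempty φ f hT (hP n)
  have hanti : Antitone D := antitone_nat_of_succ_le hDmono
  set c' : ℝ := ‖f‖ + 1 with hc'
  have hc'pos : 0 < c' := by positivity
  set v : ℕ → BoundedContinuousFunction S ℝ :=
    fun k => (BoundedContinuousFunction.const S 1 - (k : ℝ) • idb (D k) 1) ⊔ 0 with hv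
  have hvx : ∀ k x, v k x = max (1 - (k : ℝ) * min (Metric.infDist x (D k)) 1) 0 := by
    intro k x
    simp [hv, idb_apply]
  set u : ℕ → BoundedContinuousFunction S ℝ :=
    fun n => Nat.rec (v 0) (fun k uk => uk ⊓ v (k + 1)) n with hu
  have hu0 : u 0 = v 0 := rfl
  have husucc : ∀ n, u (n + 1) = u n ⊓ v (n + 1) := fun n => rfl
  have huv : ∀ n, u n ≤ v n := by
    intro n
    cases n with
    | zero => exact le_rfl
    | succ n => rw [husucc]; exact inf_le_right
  have hu_anti : ∀ n, u (n + 1) ≤ u n := fun n => by rw [husucc]; exact inf_le_left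
  have hv_nonneg : ∀ k x, 0 ≤ v k x := fun k x => (hvx k x) ▸ le_max_right _ _
  have hu_nonneg : ∀ n x, 0 ≤ u n x := by
    intro n
    induction n with
    | zero => exact hv_nonneg 0
    | succ n ih =>
      intro x
      have : u (n + 1) x = min (u n x) (v (n + 1) x) := by rw [husucc]; simp
      rw [this]
      exact le_min (ih x) (hv_nonneg _ x)
  have hv_one : ∀ k, ∀ x ∈ D k, v k x = 1 := by
    intro k x hx
    rw [hvx, Metric.infDist_zero_of_mem hx]
    norm_num
  have hu_one : ∀ n, ∀ x ∈ D n, 1 ≤ u n x := by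
    intro n
    induction n with
    | zero => intro x hx; rw [hu0, hv_one 0 x hx]
    | succ n ih =>
      intro x hx
      have h1 : u (n + 1) x = min (u n x) (v (n + 1) x) := by rw [husucc]; simp
      rw [h1, hv_one (n + 1) x hx]
      exact le_min (ih x (hDmono n hx)) le_rfl
  -- pointwise convergence to 0
  have hptw : ∀ x, Tendsto (fun n => u n x) atTop (𝓝 0) := by
    intro x
    apply tendsto_zero_of_eventually_zero
    have hxnot : ∃ k, x ∉ D k := by
      by_contra hall
      push_neg at hall
      have : x ∈ ⋂ n, D n := Set.mem_iInter.2 hall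
      rw [hcon] at this
      exact this
    obtain ⟨k0, hk0⟩ := hxnot
    have hδ : 0 < min (Metric.infDist x (D k0)) 1 :=
      lt_min (((hDcl k0).notMem_iff_infDist_pos (hne k0)).1 hk0) zero_lt_one
    set δ : ℝ := min (Metric.infDist x (D k0)) 1 with hδdef
    obtain ⟨K, hK⟩ := exists_nat_ge (1 / δ)
    filter_upwards [eventually_ge_atTop (max k0 K)] with n hn
    have hnk0 : k0 ≤ n := le_of_max_le_left hn
    have hnK : K ≤ n := le_of_max_le_right hn
    have hsub : D n ⊆ D k0 := hanti hnk0
    have hlarge : δ ≤ min (Metric.infDist x (D n)) 1 := by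
      refine le_min ?_ (min_le_right _ _)
      exact (min_le_left _ _).trans (Metric.infDist_le_infDist_of_subset hsub (hne n))
    have hv0 : v n x = 0 := by
      rw [hvx]
      apply max_eq_right
      have h2 : (1 : ℝ) ≤ (n : ℝ) * δ := by
        have h3 : 1 / δ ≤ (n : ℝ) := hK.trans (by exact_mod_cast hnK)
        calc (1 : ℝ) = (1 / δ) * δ := by field_simp
          _ ≤ (n : ℝ) * δ := by nlinarith [hδ]
      have h4 : (n : ℝ) * δ ≤ (n : ℝ) * min (Metric.infDist x (D n)) 1 := by
        have : (0 : ℝ) ≤ (n : ℝ) := Nat.cast_nonneg n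
        nlinarith [hlarge]
      linarith
    have := huv n x
    have := hu_nonneg n x
    have : u n x ≤ 0 := by rw [← hv0]; exact huv n x
    linarith [hu_nonneg n x]
  -- apply continuity from above
  have htend := hca (fun n => c' • u n)
    (fun n => bcf_le_of_ptwise fun x => by
      simp only [BoundedContinuousFunction.coe_smul, Pi.smul_apply, smul_eq_mul]
      exact mul_le_mul_of_nonneg_left (hu_anti n x) hc'pos.le)
    (fun x => by
      have := (hptw x).const_mul c'
      simpa using this)
  have hlow : ∀ n, c ≤ φ (c' • u n) := by
    intro n
    apply hP n
    intro x hx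
    simp only [BoundedContinuousFunction.coe_smul, Pi.smul_apply, smul_eq_mul]
    have h5 : f x ≤ c' := by
      nlinarith [f.norm_coe_le_norm x, le_abs_self (f x), abs_nonneg (f x),
        (Real.norm_eq_abs (f x)) ▸ f.norm_coe_le_norm x]
    calc f x ≤ c' := h5
      _ = c' * 1 := by ring
      _ ≤ c' * u n x := by nlinarith [hu_one n x hx]
  have : c ≤ 0 := ge_of_tendsto' htend hlow
  linarith

/-- From the localization property on all closed balls around `x`, one obtains the dual
bound at `x`. -/
lemma point_bound
    (hT : ∀ (g : BoundedContinuousFunction S ℝ) (c : ℝ),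
      φ (g + BoundedContinuousFunction.const S c) = φ g + c)
    {c : ℝ} {x : S} (hQ : ∀ ρ > (0 : ℝ), Pm φ f c (Metric.closedBall x ρ))
    (g : BoundedContinuousFunction S ℝ) : g x - φ g ≤ f x - c := by
  have key : ∀ η > (0 : ℝ), c ≤ φ g + (f x - g x + η) := by
    intro η hη
    have hcont : ContinuousAt (fun y => f y - g y) x :=
      (f.continuous.sub g.continuous).continuousAt
    have hmem : {y | f y - g y < f x - g x + η} ∈ 𝓝 x :=
      hcont (Iio_mem_nhds (show f x - g x < f x - g x + η by linarith))
    obtain ⟨ρ, hρpos, hρ⟩ := Metric.nhds_basis_closedBall.mem_iff.1 hmem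
    have h1 := hQ ρ hρpos (g + BoundedContinuousFunction.const S (f x - g x + η))
      (by
        intro y hy
        have h2 := hρ hy
        simp only [Set.mem_setOf_eq] at h2
        simp only [BoundedContinuousFunction.coe_add, Pi.add_apply,
          BoundedContinuousFunction.const_apply]
        linarith)
    rwa [hT] at h1
  by_contra hcon
  push_neg at hcon
  have h3 := key ((g x - φ g - (f x - c)) / 2) (by linarith)
  linarith

/-- A single run of the nested-ball construction: for every `ε ∈ (0, 1/2]` there is a point
`x` such that the localization of `φ` on every closed ball around `x` is at least `1 - ε`. -/
lemma exists_point [Nonempty S] [TopologicalSpace.SeparableSpace S]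
    (hT : ∀ (g : BoundedContinuousFunction S ℝ) (c : ℝ),
      φ (g + BoundedContinuousFunction.const S c) = φ g + c)
    (hM : ∀ g h : BoundedContinuousFunction S ℝ, g ≤ h → φ g ≤ φ h)
    (hms : ∀ g h : BoundedContinuousFunction S ℝ, φ (g ⊔ h) ≤ max (φ g) (φ h))
    (hca : ∀ u : ℕ → BoundedContinuousFunction S ℝ, (∀ n, u (n + 1) ≤ u n) →
      (∀ x, Tendsto (fun n => u n x) atTop (𝓝 0)) →
      Tendsto (fun n => φ (u n)) atTop (𝓝 0))
    (hf1 : φ f = 1) {ε : ℝ} (hε : 0 < ε) (hε2 : ε ≤ 1 / 2) :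
    ∃ x : S, ∀ ρ > (0 : ℝ), Pm φ f (1 - ε) (Metric.closedBall x ρ) := by
  set m : ℕ → ℝ := fun n => 1 - ε * (1 - (1 / 2) ^ n) with hm
  have hm0 : m 0 = 1 := by simp [hm]
  have hpow_pos : ∀ n : ℕ, (0 : ℝ) < (1 / 2) ^ n := fun n => by positivity
  have hpow_le : ∀ n : ℕ, ((1 : ℝ) / 2) ^ n ≤ 1 := fun n =>
    pow_le_one₀ (by norm_num) (by norm_num)
  have hmlb : ∀ n, 1 - ε ≤ m n := by
    intro n
    have := hpow_pos n
    simp only [hm]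
    nlinarith
  have hmub : ∀ n, m n ≤ 1 := by
    intro n
    have h1 := hpow_le n
    simp only [hm]
    nlinarith
  have hmd : ∀ n, m n - m (n + 1) = ε * (1 / 2) ^ (n + 1) := by
    intro n
    simp only [hm]
    ring
  set Good : ℕ → Set S → Prop := fun n C => IsClosed C ∧ Pm φ f (m n) C ∧
    (n = 0 ∨ ∃ z : S, C ⊆ Metric.closedBall z ((1 / 2) ^ n)) with hGoodDef
  have hstep : ∀ n (C : Set S), Good n C → ∃ C', C' ⊆ C ∧ Good (n + 1) C' := by
    rintro n C ⟨hCcl, hCP, -⟩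
    have hrpos : (0 : ℝ) < (1 / 2) ^ (n + 1) := hpow_pos (n + 1)
    have hcov : C ⊆ ⋃ k, (C ∩ Metric.closedBall (TopologicalSpace.denseSeq S k)
        ((1 / 2) ^ (n + 1))) := by
      intro y hy
      obtain ⟨k, hk⟩ := (TopologicalSpace.denseRange_denseSeq S).exists_dist_lt y hrpos
      exact Set.mem_iUnion.2 ⟨k, hy, Metric.mem_closedBall.2 hk.le⟩
    have hepos : 0 < ε * (1 / 2) ^ (n + 1) := by positivity
    have hesmall : ε * (1 / 2) ^ (n + 1) < m n := by
      have h2 := hmlb n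
      have h6 : ((1 : ℝ) / 2) ^ (n + 1) ≤ 1 / 2 := by
        rw [pow_succ]
        nlinarith [hpow_le n, hpow_pos n]
      have h7 : ε * (1 / 2) ^ (n + 1) ≤ (1 / 2) * (1 / 2) :=
        mul_le_mul hε2 h6 hrpos.le (by norm_num)
      nlinarith [mul_pos hε (hpow_pos n), hε2]
    obtain ⟨k, hk⟩ := cover_lemma φ f hT hms hca hCcl hcov hepos hesmall hCP
    refine ⟨C ∩ Metric.closedBall (TopologicalSpace.denseSeq S k) ((1 / 2) ^ (n + 1)),
      Set.inter_subset_left, hCcl.inter Metric.isClosed_closedBall, ?_,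
      Or.inr ⟨TopologicalSpace.denseSeq S k, Set.inter_subset_right⟩⟩
    have : m n - ε * (1 / 2) ^ (n + 1) = m (n + 1) := by rw [← hmd]; ring
    rwa [this] at hk
  have hgood0 : Good 0 Set.univ := by
    refine ⟨isClosed_univ, ?_, Or.inl rfl⟩
    rw [hm0]
    intro g hg
    rw [← hf1]
    exact hM f g (bcf_le_of_ptwise fun x => hg x trivial)
  let u : ∀ _ : ℕ, {C : Set S // Good _ C} := fun n =>
    Nat.rec (motive := fun n => {C : Set S // Good n C}) ⟨Set.univ, hgood0⟩
      (fun n p => ⟨(hstep n p.1 p.2).choose,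
        ((hstep n p.1 p.2).choose_spec).2⟩) n
  have hsub : ∀ n, (u (n + 1)).1 ⊆ (u n).1 := fun n =>
    ((hstep n (u n).1 (u n).2).choose_spec).1
  obtain ⟨x, hx⟩ := inter_lemma φ f hT hca (fun n => (u n).2.1) hsub
    (c := 1 - ε) (by linarith) (fun n => Pm_mono φ f (hmlb n) (u n).2.2.1)
  refine ⟨x, fun ρ hρ => ?_⟩
  obtain ⟨n, hn⟩ := exists_pow_lt_of_lt_one (show (0 : ℝ) < ρ / 2 by linarith)
    (show (1 : ℝ) / 2 < 1 by norm_num)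
  obtain ⟨z, hz⟩ := (u (n + 1)).2.2.2.resolve_left (Nat.succ_ne_zero n)
  have hxn : x ∈ (u (n + 1)).1 := Set.mem_iInter.1 hx (n + 1)
  have hsubball : (u (n + 1)).1 ⊆ Metric.closedBall x ρ := by
    intro y hy
    have h1 : dist y z ≤ (1 / 2) ^ (n + 1) := hz hy
    have h2 : dist x z ≤ (1 / 2) ^ (n + 1) := hz hxn
    have h3 : dist y x ≤ dist y z + dist x z := dist_triangle_right y x z
    have h4 : ((1 : ℝ) / 2) ^ (n + 1) = (1 / 2) ^ n * (1 / 2) := pow_succ _ _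
    have h5 := hpow_pos n
    rw [Metric.mem_closedBall]
    nlinarith
  exact Pm_mono_set φ f hsubball (Pm_mono φ f (hmlb (n + 1)) (u (n + 1)).2.2.1)

/-- There is no infinite uniformly separated family of points near each of which the
localization of `φ` is at least `1/2`. -/
lemma separated_false
    (hca : ∀ u : ℕ → BoundedContinuousFunction S ℝ, (∀ n, u (n + 1) ≤ u n) →
      (∀ x, Tendsto (fun n => u n x) atTop (𝓝 0)) →
      Tendsto (fun n => φ (u n)) atTop (𝓝 0))
    {r : ℝ} (hr : 0 < r) {y : ℕ → S}
    (hsep : ∀ i j, i ≠ j → r ≤ dist (y i) (y j))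
    (hQ : ∀ i, Pm φ f (1 / 2) (Metric.closedBall (y i) (r / 6))) : False := by
  set c' : ℝ := 2 * (‖f‖ + 1) with hc'
  have hc'pos : 0 < c' := by positivity
  set T : ℕ → Set S := fun j => y '' Set.Ici j with hTdef
  have hTne : ∀ j, (T j).Nonempty := fun j => ⟨y j, Set.mem_image_of_mem y (Set.mem_Ici.2 le_rfl)⟩
  set W : ℕ → BoundedContinuousFunction S ℝ :=
    fun j => (BoundedContinuousFunction.const S 1 - (3 / r) • idb (T j) (r / 3)) ⊔ 0 with hW
  have hWx : ∀ j x, W j x = max (1 - (3 / r) * min (Metric.infDist x (T j)) (r / 3)) 0 := by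
    intro j x
    simp [hW, idb_apply]
  have hanti : ∀ j, W (j + 1) ≤ W j := by
    intro j
    apply bcf_le_of_ptwise
    intro x
    rw [hWx, hWx]
    have hsub : T (j + 1) ⊆ T j := Set.image_mono (f := y) (Set.Ici_subset_Ici.2 (Nat.le_succ j))
    have h1 : Metric.infDist x (T j) ≤ Metric.infDist x (T (j + 1)) :=
      Metric.infDist_le_infDist_of_subset hsub (hTne (j + 1))
    have h2 : min (Metric.infDist x (T j)) (r / 3) ≤ min (Metric.infDist x (T (j + 1))) (r / 3) :=
      min_le_min h1 le_rfl
    have h3 : 0 < 3 / r := by positivity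
    refine max_le_max ?_ le_rfl
    nlinarith
  have hW0 : ∀ x, Tendsto (fun j => W j x) atTop (𝓝 0) := by
    intro x
    apply tendsto_zero_of_eventually_zero
    have hone : ∃ j0, ∀ i, j0 ≤ i → r / 2 ≤ dist x (y i) := by
      by_cases hex : ∃ i, dist x (y i) < r / 2
      · obtain ⟨i0, hi0⟩ := hex
        refine ⟨i0 + 1, fun i hi => ?_⟩
        by_contra hlt
        push_neg at hlt
        have hne : i ≠ i0 := by omega
        have := hsep i i0 hne
        have h4 := dist_triangle (y i) x (y i0)
        rw [dist_comm (y i) x] at h4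
        linarith
      · push_neg at hex
        exact ⟨0, fun i _ => hex i⟩
    obtain ⟨j0, hj0⟩ := hone
    filter_upwards [eventually_ge_atTop j0] with j hj
    have hinf : r / 2 ≤ Metric.infDist x (T j) := by
      by_contra hlt
      push_neg at hlt
      obtain ⟨z, hz, hdz⟩ := (Metric.infDist_lt_iff (hTne j)).1 hlt
      obtain ⟨i, hi, rfl⟩ := hz
      exact absurd hdz (not_lt.2 (hj0 i (hj.trans hi)))
    have hmin : min (Metric.infDist x (T j)) (r / 3) = r / 3 :=
      min_eq_right (by linarith)
    rw [hWx, hmin]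
    apply max_eq_right
    have : (3 / r) * (r / 3) = 1 := by field_simp
    linarith
  have htend := hca (fun j => c' • W j)
    (fun j => bcf_le_of_ptwise fun x => by
      simp only [BoundedContinuousFunction.coe_smul, Pi.smul_apply, smul_eq_mul]
      exact mul_le_mul_of_nonneg_left (hanti j x) hc'pos.le)
    (fun x => by
      have := (hW0 x).const_mul c'
      simpa using this)
  have hlow : ∀ j, 1 / 2 ≤ φ (c' • W j) := by
    intro j
    apply hQ j
    intro x hx
    simp only [BoundedContinuousFunction.coe_smul, Pi.smul_apply, smul_eq_mul]
    have h5 : Metric.infDist x (T j) ≤ r / 6 := by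
      refine (Metric.infDist_le_dist_of_mem (Set.mem_image_of_mem y (Set.mem_Ici.2 le_rfl))).trans ?_
      exact Metric.mem_closedBall.1 hx
    have h6 : min (Metric.infDist x (T j)) (r / 3) ≤ r / 6 :=
      (min_le_left _ _).trans h5
    have h7 : (1 : ℝ) / 2 ≤ W j x := by
      rw [hWx]
      have h8 : (3 / r) * min (Metric.infDist x (T j)) (r / 3) ≤ (3 / r) * (r / 6) := by
        have : 0 < 3 / r := by positivity
        nlinarith
      have h9 : (3 / r) * (r / 6) = 1 / 2 := by field_simp; ring
      refine le_max_iff.2 (Or.inl ?_)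
      linarith [h8, h9.le]
    have h10 : f x ≤ c' / 2 := by
      nlinarith [f.norm_coe_le_norm x, le_abs_self (f x),
        (Real.norm_eq_abs (f x)) ▸ f.norm_coe_le_norm x]
    nlinarith [h7, hc'pos]
  have : (1 : ℝ) / 2 ≤ 0 := ge_of_tendsto' htend hlow
  linarith

/-- Main representation lemma: for a normalized `f` (`φ f = 1`), there is a point `x`
where the dual bound is attained. -/
lemma main_rep [Nonempty S] [TopologicalSpace.SeparableSpace S]
    (hT : ∀ (g : BoundedContinuousFunction S ℝ) (c : ℝ),
      φ (g + BoundedContinuousFunction.const S c) = φ g + c)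
    (hM : ∀ g h : BoundedContinuousFunction S ℝ, g ≤ h → φ g ≤ φ h)
    (hms : ∀ g h : BoundedContinuousFunction S ℝ, φ (g ⊔ h) ≤ max (φ g) (φ h))
    (hca : ∀ u : ℕ → BoundedContinuousFunction S ℝ, (∀ n, u (n + 1) ≤ u n) →
      (∀ x, Tendsto (fun n => u n x) atTop (𝓝 0)) →
      Tendsto (fun n => φ (u n)) atTop (𝓝 0))
    (hf1 : φ f = 1) :
    ∃ x : S, ∀ g : BoundedContinuousFunction S ℝ, g x - φ g ≤ f x - 1 := by
  set σ : ℕ → ℝ := fun n => (1 / 2) * (1 / 2) ^ n with hσdef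
  have hσpos : ∀ n, 0 < σ n := fun n => by positivity
  have hσle : ∀ n, σ n ≤ 1 / 2 := by
    intro n
    have h1 : ((1 : ℝ) / 2) ^ n ≤ 1 := pow_le_one₀ (by norm_num) (by norm_num)
    simp only [hσdef]
    nlinarith
  have hrun : ∀ n : ℕ, ∃ x, ∀ ρ > (0 : ℝ), Pm φ f (1 - σ n) (Metric.closedBall x ρ) :=
    fun n => exists_point φ f hT hM hms hca hf1 (hσpos n) (hσle n)
  choose x hx using hrun
  have hxhalf : ∀ n, ∀ ρ > (0 : ℝ), Pm φ f (1 / 2) (Metric.closedBall (x n) ρ) :=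
    fun n ρ hρ => Pm_mono φ f (by linarith [hσle n]) (hx n ρ hρ)
  -- the range of `x` is totally bounded
  have htb : TotallyBounded (Set.range x) := by
    rw [Metric.totallyBounded_iff]
    by_contra hcon
    push_neg at hcon
    obtain ⟨ε, hε, hcov⟩ := hcon
    letI : Std.Symm fun a b : S => ε ≤ dist a b := ⟨fun a b h => by rwa [dist_comm]⟩
    have hsel : ∀ s : Finset S, (∀ z ∈ s, z ∈ Set.range x) →
        ∃ w, w ∈ Set.range x ∧ ∀ z ∈ s, ε ≤ dist z w := by
      intro s hs
      have hnotsub := hcov s s.finite_toSet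
      rw [Set.not_subset] at hnotsub
      obtain ⟨z, hz1, hz2⟩ := hnotsub
      refine ⟨z, hz1, fun w hw => ?_⟩
      by_contra hlt
      push_neg at hlt
      exact hz2 (Set.mem_biUnion hw (Metric.mem_ball.2 (by rwa [dist_comm])))
    obtain ⟨u, hu1, hu2⟩ := exists_seq_of_forall_finset_exists'
      (fun z : S => z ∈ Set.range x) (fun a b => ε ≤ dist a b) hsel
    refine separated_false φ f hca (y := u) hε (fun i j hij => hu2 hij) (fun i => ?_)
    obtain ⟨n, hn⟩ := hu1 i
    exact hn ▸ hxhalf n _ (by positivity)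
  -- extract a Cauchy subsequence via the completion
  set X : ℕ → UniformSpace.Completion S := fun n => (x n : UniformSpace.Completion S) with hX
  have hrangeX : Set.range X = ((↑) : S → UniformSpace.Completion S) '' Set.range x := by
    have hcomp : X = ((↑) : S → UniformSpace.Completion S) ∘ x := rfl
    rw [hcomp, Set.range_comp]
  have hK : IsCompact (closure (Set.range X)) := by
    rw [isCompact_iff_totallyBounded_isComplete]
    constructor
    · rw [hrangeX]
      exact (htb.image (UniformSpace.Completion.uniformContinuous_coe S)).closure
    · exact isClosed_closure.isComplete
  obtain ⟨ℓ, -, θ, hθmono, hθtend⟩ :=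
    hK.tendsto_subseq (fun n => subset_closure (Set.mem_range_self n))
  have hXc : CauchySeq (X ∘ θ) := hθtend.cauchySeq
  have hcs : CauchySeq (x ∘ θ) := by
    rw [Metric.cauchySeq_iff] at hXc ⊢
    intro ε hε
    obtain ⟨N, hN⟩ := hXc ε hε
    refine ⟨N, fun a ha b hb => ?_⟩
    have := hN a ha b hb
    simp only [Function.comp_apply, hX] at this ⊢
    rwa [UniformSpace.Completion.dist_eq] at this
  -- extract a subsequence with geometric rate
  have hrate : ∀ j : ℕ, ∃ N, ∀ a ≥ N, ∀ b ≥ N,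
      dist ((x ∘ θ) a) ((x ∘ θ) b) < (1 / 2) ^ (j + 1) :=
    fun j => Metric.cauchySeq_iff.1 hcs _ (by positivity)
  choose M hM' using hrate
  set θ' : ℕ → ℕ := fun j => j + (Finset.range (j + 1)).sup M with hθ'
  have hθ'mono : StrictMono θ' := by
    apply strictMono_nat_of_lt_succ
    intro j
    have h1 : (Finset.range (j + 1)).sup M ≤ (Finset.range (j + 1 + 1)).sup M :=
      Finset.sup_mono (Finset.range_subset_range.2 (by omega))
    simp only [hθ']
    omega
  have hθ'ge : ∀ j, M j ≤ θ' j := by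
    intro j
    have : M j ≤ (Finset.range (j + 1)).sup M := Finset.le_sup (Finset.mem_range.2 (by omega))
    simp only [hθ']
    omega
  have hθ'ge' : ∀ j, M j ≤ θ' (j + 1) := by
    intro j
    have : M j ≤ (Finset.range (j + 1 + 1)).sup M := Finset.le_sup (Finset.mem_range.2 (by omega))
    simp only [hθ']
    omega
  have hrate2 : ∀ j, dist ((x ∘ θ) (θ' (j + 1))) ((x ∘ θ) (θ' j)) < (1 / 2) ^ (j + 1) :=
    fun j => hM' j _ (hθ'ge' j) _ (hθ'ge j)
  set y : ℕ → S := fun j => x (θ (θ' j)) with hy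
  set D : ℕ → Set S := fun j => Metric.closedBall (y j) ((1 / 2) ^ j) with hD
  have hDsub : ∀ j, D (j + 1) ⊆ D j := by
    intro j z hz
    simp only [hD, Metric.mem_closedBall] at hz ⊢
    have h2 : dist (y (j + 1)) (y j) < (1 / 2) ^ (j + 1) := hrate2 j
    have h3 : dist z (y j) ≤ dist z (y (j + 1)) + dist (y (j + 1)) (y j) := dist_triangle _ _ _
    have h4 : ((1 : ℝ) / 2) ^ j = (1 / 2) ^ (j + 1) + (1 / 2) ^ (j + 1) := by ring
    linarith
  have hPD : ∀ j, Pm φ f (1 / 2) (D j) := fun j => hxhalf (θ (θ' j)) _ (by positivity)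
  obtain ⟨z, hz⟩ := inter_lemma φ f hT hca (fun j => Metric.isClosed_closedBall) hDsub
    one_half_pos hPD
  refine ⟨z, fun g => ?_⟩
  have hdist : ∀ j, dist (y j) z ≤ (1 / 2) ^ j := by
    intro j
    have := Set.mem_iInter.1 hz j
    simp only [hD, Metric.mem_closedBall] at this
    rwa [dist_comm]
  have hy_tend : Tendsto y atTop (𝓝 z) := by
    rw [tendsto_iff_dist_tendsto_zero]
    exact squeeze_zero (fun j => dist_nonneg) hdist
      (tendsto_pow_atTop_nhds_zero_of_lt_one (by norm_num) (by norm_num))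
  have hσtend : Tendsto (fun j => σ (θ (θ' j))) atTop (𝓝 0) := by
    apply squeeze_zero (fun j => (hσpos _).le) (g := fun j => (1 / 2) * (1 / 2) ^ j)
    · intro j
      have h5 : j ≤ θ (θ' j) := (hθmono.comp hθ'mono).le_apply
      have h6 : ((1 : ℝ) / 2) ^ (θ (θ' j)) ≤ (1 / 2) ^ j :=
        pow_le_pow_of_le_one (by norm_num) (by norm_num) h5
      simp only [hσdef]
      nlinarith
    · have := (tendsto_pow_atTop_nhds_zero_of_lt_one
        (show (0:ℝ) ≤ 1/2 by norm_num) (show (1:ℝ)/2 < 1 by norm_num)).const_mul (1/2 : ℝ)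
      simpa using this
  have hkey : ∀ j, g (y j) - φ g ≤ f (y j) - (1 - σ (θ (θ' j))) :=
    fun j => point_bound φ f hT (hx (θ (θ' j))) g
  have h1 : Tendsto (fun j => g (y j) - φ g) atTop (𝓝 (g z - φ g)) :=
    ((g.continuous.tendsto z).comp hy_tend).sub tendsto_const_nhds
  have h2 : Tendsto (fun j => f (y j) - (1 - σ (θ (θ' j)))) atTop (𝓝 (f z - (1 - 0))) :=
    ((f.continuous.tendsto z).comp hy_tend).sub (tendsto_const_nhds.sub hσtend)
  have h3 := le_of_tendsto_of_tendsto' h1 h2 hkey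
  simpa using h3

end Aux

theorem stmt5 {S : Type*} [MetricSpace S] [Nonempty S] [TopologicalSpace.SeparableSpace S]
    (φ : BoundedContinuousFunction S ℝ → ℝ)
    (hN : φ 0 = 0)
    (hT : ∀ (f : BoundedContinuousFunction S ℝ) (c : ℝ),
      φ (f + BoundedContinuousFunction.const S c) = φ f + c)
    (hM : ∀ f g : BoundedContinuousFunction S ℝ, f ≤ g → φ f ≤ φ g)
    -- continuity from above
    (hca : ∀ f : ℕ → BoundedContinuousFunction S ℝ,
      (∀ n, f (n + 1) ≤ f n) →
      (∀ x, Tendsto (fun n => f n x) atTop (nhds 0)) →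
      Tendsto (fun n => φ (f n)) atTop (nhds 0)) :
    -- max-stability implies the dual representation with attained maximum
    ((∀ f g : BoundedContinuousFunction S ℝ, φ (f ⊔ g) ≤ max (φ f) (φ g)) →
      ∀ f : BoundedContinuousFunction S ℝ, ∃ x : S,
        ((φ f : ℝ) : EReal) =
          ((f x : ℝ) : EReal) -
            (⨆ g : BoundedContinuousFunction S ℝ, ((g x - φ g : ℝ) : EReal)) ∧
        ∀ y : S,
          ((f y : ℝ) : EReal) -
              (⨆ g : BoundedContinuousFunction S ℝ, ((g y - φ g : ℝ) : EReal)) ≤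
            ((φ f : ℝ) : EReal)) ∧
    -- conversely, if the acceptance set is of the form {f ≤ γ}, then φ is max-stable
    ((∃ γ : S → EReal, (∀ x, γ x ≠ ⊥) ∧
        ∀ f : BoundedContinuousFunction S ℝ,
          (φ f ≤ 0 ↔ ∀ x, ((f x : ℝ) : EReal) ≤ γ x)) →
      ∀ f g : BoundedContinuousFunction S ℝ, φ (f ⊔ g) ≤ max (φ f) (φ g)) := by
  constructor
  · -- max-stability gives the dual representation with attained maximum
    intro hms f
    set F : BoundedContinuousFunction S ℝ :=
      f + BoundedContinuousFunction.const S (1 - φ f) with hF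
    have hF1 : φ F = 1 := by rw [hF, hT]; ring
    obtain ⟨x, hmain⟩ := main_rep φ F hT hM hms hca hF1
    have hmain' : ∀ g : BoundedContinuousFunction S ℝ, g x - φ g ≤ f x - φ f := by
      intro g
      have h1 := hmain g
      have hFx : F x = f x + (1 - φ f) := by simp [hF]
      rw [hFx] at h1
      linarith
    refine ⟨x, ?_, ?_⟩
    · have hsup_eq : (⨆ g : BoundedContinuousFunction S ℝ, ((g x - φ g : ℝ) : EReal)) =
          ((f x - φ f : ℝ) : EReal) := by
        apply le_antisymm
        · exact iSup_le fun g => EReal.coe_le_coe_iff.2 (hmain' g)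
        · exact le_iSup (fun g : BoundedContinuousFunction S ℝ =>
            ((g x - φ g : ℝ) : EReal)) f
      rw [hsup_eq, ← EReal.coe_sub, EReal.coe_eq_coe_iff]
      ring
    · intro y
      have h1 : ((f y - φ f : ℝ) : EReal) ≤
          ⨆ g : BoundedContinuousFunction S ℝ, ((g y - φ g : ℝ) : EReal) :=
        le_iSup (fun g : BoundedContinuousFunction S ℝ => ((g y - φ g : ℝ) : EReal)) f
      have h2 : ((f y : ℝ) : EReal) -
          (⨆ g : BoundedContinuousFunction S ℝ, ((g y - φ g : ℝ) : EReal)) ≤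
          ((f y : ℝ) : EReal) - ((f y - φ f : ℝ) : EReal) :=
        EReal.sub_le_sub le_rfl h1
      refine h2.trans ?_
      rw [← EReal.coe_sub, EReal.coe_le_coe_iff]
      linarith
  · -- converse
    rintro ⟨γ, -, hγ⟩ f g
    set m : ℝ := max (φ f) (φ g) with hm
    have h1 : φ (f + BoundedContinuousFunction.const S (-m)) ≤ 0 := by
      rw [hT]
      have := le_max_left (φ f) (φ g)
      linarith
    have h2 : φ (g + BoundedContinuousFunction.const S (-m)) ≤ 0 := by
      rw [hT]
      have := le_max_right (φ f) (φ g)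
      linarith
    have hf' := (hγ _).1 h1
    have hg' := (hγ _).1 h2
    have h3 : φ ((f ⊔ g) + BoundedContinuousFunction.const S (-m)) ≤ 0 := by
      refine (hγ _).2 fun x => ?_
      have hx : ((f ⊔ g) + BoundedContinuousFunction.const S (-m)) x =
          max (f x) (g x) + (-m) := by
        simp
      rcases le_total (f x) (g x) with h | h
      · have hg'' := hg' x
        have hgx : (g + BoundedContinuousFunction.const S (-m)) x = g x + (-m) := by simp
        rw [hgx] at hg''
        rw [hx, max_eq_right h]
        exact hg''
      · have hf'' := hf' x
        have hfx : (f + BoundedContinuousFunction.const S (-m)) x = f x + (-m) := by simp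
        rw [hfx] at hf''
        rw [hx, max_eq_left h]
        exact hf''
    rw [hT] at h3
    linarith
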